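/- The number of noncrossing 2-colored matchings on the set {1,...,2n} equals C_n * C_{n+1}. -/

import Mathlib

open Finset Nat

/-- An `m`-colored matching on `{1,…,2n}`, encoded by a fixed-point-free involution `f`
together with a color function `c` constant on arcs. -/
def IsColoredMatching (n m : ℕ) (f : Fin (2*n) → Fin (2*n)) (c : Fin (2*n) → Fin m) : Prop :=
  (∀ i, f (f i) = i) ∧ (∀ i, f i ≠ i) ∧ (∀ i, c (f i) = c i)

/-- Noncrossing: no two arcs of the same color cross. -/
def IsNoncrossing (n m : ℕ) (f : Fin (2*n) → Fin (2*n)) (c : Fin (2*n) → Fin m) : Prop :=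
  ¬ ∃ i j : Fin (2*n), c i = c j ∧ i < j ∧ j < f i ∧ f i < f j

/-- Noncrossing perfect matching on a finset `s ⊆ ℕ`, as a function fixing the complement. -/
def NCfun (s : Finset ℕ) (f : ℕ → ℕ) : Prop :=
  (∀ i ∈ s, f i ∈ s) ∧ (∀ i, i ∉ s → f i = i) ∧ (∀ i ∈ s, f (f i) = i) ∧
  (∀ i ∈ s, f i ≠ i) ∧ ∀ i ∈ s, ∀ j ∈ s, i < j → j < f i → ¬ (f i < f j)

def NC (s : Finset ℕ) : Type := {f : ℕ → ℕ // NCfun s f}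

noncomputable def ifcat (m : ℕ) : ℕ := if 2 ∣ m then catalan (m / 2) else 0

instance NC.finite (s : Finset ℕ) : Finite (NC s) := by
  have hinj : Function.Injective
      (fun (f : NC s) (x : {x // x ∈ s}) => (⟨f.1 x, f.2.1 x x.2⟩ : {x // x ∈ s})) := by
    intro f g h
    apply Subtype.ext; funext x
    by_cases hx : x ∈ s
    · exact congrArg Subtype.val (congrFun h ⟨x, hx⟩)
    · rw [f.2.2.1 x hx, g.2.2.1 x hx]
  exact Finite.of_injective _ hinj

lemma card_fiber_sum {α β : Type*} [Finite α] [Fintype β] (pee : α → β) :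
    Nat.card α = ∑ b : β, Nat.card {a // pee a = b} := by
  classical
  cases nonempty_fintype α
  rw [Nat.card_eq_fintype_card, ← Fintype.card_congr (Equiv.sigmaFiberEquiv pee),
    Fintype.card_sigma]
  exact Finset.sum_congr rfl fun b _ => (Nat.card_eq_fintype_card).symm

lemma NC_empty : Nat.card (NC ∅) = 1 := by
  have hne : Nonempty (NC ∅) := ⟨⟨id, by simp [NCfun]⟩⟩
  have hsub : Subsingleton (NC ∅) := ⟨by
    rintro ⟨f, hf⟩ ⟨g, hg⟩
    apply Subtype.ext; funext x
    show f x = g x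
    rw [hf.2.1 x (by simp), hg.2.1 x (by simp)]⟩
  exact Nat.card_eq_one_iff_unique.mpr ⟨hsub, hne⟩


lemma NCfun.restrict {s t : Finset ℕ} (hts : t ⊆ s) {f : ℕ → ℕ} (hf : NCfun s f)
    (hmap : ∀ x ∈ t, f x ∈ t) :
    NCfun t (fun x => if x ∈ t then f x else x) := by
  obtain ⟨h1, h2, h3, h4, h5⟩ := hf
  refine ⟨?_, ?_, ?_, ?_, ?_⟩
  · intro i hi; simp only [if_pos hi]; exact hmap i hi
  · intro i hi; simp only [if_neg hi]
  · intro i hi; simp only [if_pos hi, if_pos (hmap i hi)]; exact h3 i (hts hi)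
  · intro i hi; simp only [if_pos hi]; exact h4 i (hts hi)
  · intro i hi k hk hik
    simp only [if_pos hi, if_pos hk]
    exact h5 i (hts hi) k (hts hk) hik

lemma inner_mem {s : Finset ℕ} (hs : s.Nonempty) {f : ℕ → ℕ} (hf : NCfun s f) {j : ℕ}
    (hj : j ∈ s) (hja : j ≠ s.min' hs) (hfa : f (s.min' hs) = j) :
    ∀ x ∈ s, s.min' hs < x → x < j → (f x ∈ s ∧ s.min' hs < f x ∧ f x < j) := by
  obtain ⟨h1, h2, h3, h4, h5⟩ := hf
  intro x hx hax hxj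
  have hfx : f x ∈ s := h1 x hx
  have hfxa : f x ≠ s.min' hs := by
    intro h
    have h' := h3 x hx
    rw [h, hfa] at h'
    omega
  have haf : s.min' hs < f x := lt_of_le_of_ne (s.min'_le _ hfx) (Ne.symm hfxa)
  have hfj : f j = s.min' hs := by
    have h' := h3 (s.min' hs) (s.min'_mem hs)
    rw [hfa] at h'
    exact h'
  have hfxj : f x ≠ j := by
    intro h
    have h' := h3 x hx
    rw [h, hfj] at h'
    omega
  refine ⟨hfx, haf, ?_⟩
  rcases lt_or_gt_of_ne hfxj with h | h
  · exact h
  · exfalso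
    refine h5 (s.min' hs) (s.min'_mem hs) x hx hax ?_ ?_
    · rw [hfa]; exact hxj
    · rw [hfa]; exact h

lemma outer_mem {s : Finset ℕ} (hs : s.Nonempty) {f : ℕ → ℕ} (hf : NCfun s f) {j : ℕ}
    (hj : j ∈ s) (hja : j ≠ s.min' hs) (hfa : f (s.min' hs) = j) :
    ∀ x ∈ s, j < x → (f x ∈ s ∧ j < f x) := by
  have h1 := hf.1
  have h3 := hf.2.2.1
  intro x hx hjx
  have hfx : f x ∈ s := h1 x hx
  have hfj : f j = s.min' hs := by
    have h' := h3 (s.min' hs) (s.min'_mem hs)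
    rw [hfa] at h'
    exact h'
  have haj : s.min' hs < j := lt_of_le_of_ne (s.min'_le _ hj) (Ne.symm hja)
  have hfxa : f x ≠ s.min' hs := by
    intro h
    have h' := h3 x hx
    rw [h, hfa] at h'
    omega
  have hfxj : f x ≠ j := by
    intro h
    have h' := h3 x hx
    rw [h, hfj] at h'
    omega
  refine ⟨hfx, ?_⟩
  rcases lt_or_gt_of_ne hfxj with h | h
  · exfalso
    have haf : s.min' hs < f x := lt_of_le_of_ne (s.min'_le _ hfx) (Ne.symm hfxa)
    obtain ⟨_, _, hlt⟩ := inner_mem hs ⟨h1, hf.2.1, h3, hf.2.2.2.1, hf.2.2.2.2⟩ hj hja hfa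
      (f x) hfx haf h
    rw [h3 x hx] at hlt
    omega
  · exact h

lemma combine_NC {s : Finset ℕ} (hs : s.Nonempty) {j : ℕ} (hj : j ∈ s) (hja : j ≠ s.min' hs)
    {g h : ℕ → ℕ} (hg : NCfun (s.filter fun x => s.min' hs < x ∧ x < j) g)
    (hh : NCfun (s.filter fun x => j < x) h) :
    NCfun s (fun x => if x = s.min' hs then j else if x = j then s.min' hs
      else if x ∈ s.filter (fun x => s.min' hs < x ∧ x < j) then g x
      else if x ∈ s.filter (fun x => j < x) then h x else x) ∧
    (fun x => if x = s.min' hs then j else if x = j then s.min' hs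
      else if x ∈ s.filter (fun x => s.min' hs < x ∧ x < j) then g x
      else if x ∈ s.filter (fun x => j < x) then h x else x) (s.min' hs) = j := by
  set a := s.min' hs with ha
  set inn := s.filter (fun x => a < x ∧ x < j) with hinn
  set out := s.filter (fun x => j < x) with hout
  set F := fun x => if x = a then j else if x = j then a
      else if x ∈ inn then g x else if x ∈ out then h x else x with hF
  have haj : a < j := lt_of_le_of_ne (s.min'_le _ hj) (Ne.symm hja)
  have ham : a ∈ s := s.min'_mem hs
  -- basic facts about membership
  have hinns : inn ⊆ s := filter_subset _ _
  have houts : out ⊆ s := filter_subset _ _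
  have tricho : ∀ x ∈ s, x = a ∨ x = j ∨ x ∈ inn ∨ x ∈ out := by
    intro x hx
    have := s.min'_le x hx
    by_cases h1 : x = a
    · exact Or.inl h1
    by_cases h2 : x = j
    · exact Or.inr (Or.inl h2)
    rcases lt_or_gt_of_ne h2 with h3 | h3
    · exact Or.inr (Or.inr (Or.inl (mem_filter.2 ⟨hx, by omega, h3⟩)))
    · exact Or.inr (Or.inr (Or.inr (mem_filter.2 ⟨hx, h3⟩)))
  -- values of F
  have hFa : F a = j := by rw [hF]; simp
  have hFj : F j = a := by
    rw [hF]; simp [hja]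
  have hFinn : ∀ x ∈ inn, F x = g x := by
    intro x hx
    obtain ⟨hxs, hax, hxj⟩ := mem_filter.1 hx
    rw [hF]; simp only
    rw [if_neg (by omega), if_neg (by omega), if_pos hx]
  have hFout : ∀ x ∈ out, F x = h x := by
    intro x hx
    obtain ⟨hxs, hjx⟩ := mem_filter.1 hx
    rw [hF]; simp only
    rw [if_neg (by omega), if_neg (by omega), if_neg, if_pos hx]
    · rw [hinn]
      simp only [mem_filter]
      rintro ⟨-, -, h2⟩; omega
  have hFnot : ∀ x, x ∉ s → F x = x := by
    intro x hx
    rw [hF]; simp only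
    rw [if_neg (by rintro rfl; exact hx ham), if_neg (by rintro rfl; exact hx hj),
      if_neg (fun hc => hx (hinns hc)), if_neg (fun hc => hx (houts hc))]
  have hginn : ∀ x ∈ inn, g x ∈ inn := hg.1
  have hhout : ∀ x ∈ out, h x ∈ out := hh.1
  -- bounds from membership
  have hinnb : ∀ x ∈ inn, x ∈ s ∧ a < x ∧ x < j := fun x hx => mem_filter.1 hx |>.elim
    (fun h1 h2 => ⟨h1, h2⟩)
  have houtb : ∀ x ∈ out, x ∈ s ∧ j < x := fun x hx => mem_filter.1 hx
  constructor
  · refine ⟨?_, ?_, ?_, ?_, ?_⟩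
    · -- maps into s
      intro x hx
      rcases tricho x hx with rfl | rfl | hc | hc
      · rw [hFa]; exact hj
      · rw [hFj]; exact ham
      · rw [hFinn x hc]; exact hinns (hginn x hc)
      · rw [hFout x hc]; exact houts (hhout x hc)
    · exact hFnot
    · -- involution
      intro x hx
      rcases tricho x hx with rfl | rfl | hc | hc
      · rw [hFa, hFj]
      · rw [hFj, hFa]
      · rw [hFinn x hc, hFinn _ (hginn x hc)]
        exact hg.2.2.1 x hc
      · rw [hFout x hc, hFout _ (hhout x hc)]
        exact hh.2.2.1 x hc
    · -- no fixed point
      intro x hx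
      rcases tricho x hx with rfl | rfl | hc | hc
      · rw [hFa]; omega
      · rw [hFj]; omega
      · rw [hFinn x hc]; exact hg.2.2.2.1 x hc
      · rw [hFout x hc]; exact hh.2.2.2.1 x hc
    · -- noncrossing
      intro x hx y hy hxy hyFx hFlt
      rcases tricho x hx with rfl | rfl | hc | hc
      · -- x = a, F x = j
        rw [hFa] at hyFx hFlt
        have hyi : y ∈ inn := mem_filter.2 ⟨hy, hxy, hyFx⟩
        have := hinnb _ (hginn y hyi)
        rw [hFinn y hyi] at hFlt
        omega
      · -- x = j, F x = a : impossible since y ∈ s, a ≤ y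
        rw [hFj] at hyFx
        have := s.min'_le y hy
        omega
      · -- x ∈ inn
        obtain ⟨hxs, hax, hxj⟩ := hinnb x hc
        rw [hFinn x hc] at hyFx hFlt
        obtain ⟨_, hagx, hgxj⟩ := hinnb _ (hginn x hc)
        have hyi : y ∈ inn := mem_filter.2 ⟨hy, by omega, by omega⟩
        rw [hFinn y hyi] at hFlt
        exact hg.2.2.2.2 x hc y hyi hxy hyFx hFlt
      · -- x ∈ out
        obtain ⟨hxs, hjx⟩ := houtb x hc
        rw [hFout x hc] at hyFx hFlt
        obtain ⟨_, hjhx⟩ := houtb _ (hhout x hc)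
        have hyo : y ∈ out := mem_filter.2 ⟨hy, by omega⟩
        rw [hFout y hyo] at hFlt
        exact hh.2.2.2.2 x hc y hyo hxy hyFx hFlt
  · exact hFa

noncomputable def fiber_equiv (s : Finset ℕ) (hs : s.Nonempty) (j : ℕ) (hj : j ∈ s) (hja : j ≠ s.min' hs) :
    {f : NC s // f.1 (s.min' hs) = j} ≃
      NC (s.filter fun x => s.min' hs < x ∧ x < j) × NC (s.filter fun x => j < x) := by
  classical
  set a := s.min' hs with ha
  set inn := s.filter (fun x => a < x ∧ x < j) with hinn
  set out := s.filter (fun x => j < x) with hout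
  refine
  { toFun := fun fp =>
      (⟨fun x => if x ∈ inn then fp.1.1 x else x,
          fp.1.2.restrict (filter_subset _ _) (fun x hx => by
            obtain ⟨hxs, hax, hxj⟩ := mem_filter.1 hx
            obtain ⟨h1, h2, h3⟩ := inner_mem hs fp.1.2 hj hja fp.2 x hxs hax hxj
            exact mem_filter.2 ⟨h1, h2, h3⟩)⟩,
       ⟨fun x => if x ∈ out then fp.1.1 x else x,
          fp.1.2.restrict (filter_subset _ _) (fun x hx => by
            obtain ⟨hxs, hjx⟩ := mem_filter.1 hx
            obtain ⟨h1, h2⟩ := outer_mem hs fp.1.2 hj hja fp.2 x hxs hjx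
            exact mem_filter.2 ⟨h1, h2⟩)⟩),
    invFun := fun gh =>
      ⟨⟨_, (combine_NC hs hj hja gh.1.2 gh.2.2).1⟩, (combine_NC hs hj hja gh.1.2 gh.2.2).2⟩,
    left_inv := ?_,
    right_inv := ?_ }
  · rintro ⟨⟨f, hf⟩, hfa⟩
    apply Subtype.ext
    apply Subtype.ext
    funext x
    show (if x = a then j else if x = j then a
      else if x ∈ inn then (if x ∈ inn then f x else x)
      else if x ∈ out then (if x ∈ out then f x else x) else x) = f x
    simp only at hfa
    have ham : a ∈ s := s.min'_mem hs
    by_cases h1 : x = a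
    · subst h1; simp [hfa]
    rw [if_neg h1]
    by_cases h2 : x = j
    · subst h2
      have h' := hf.2.2.1 a ham
      rw [hfa] at h'
      simp [h']
    rw [if_neg h2]
    by_cases h3 : x ∈ inn
    · rw [if_pos h3, if_pos h3]
    rw [if_neg h3]
    by_cases h4 : x ∈ out
    · rw [if_pos h4, if_pos h4]
    rw [if_neg h4]
    by_cases hxs : x ∈ s
    · exfalso
      have := s.min'_le x hxs
      rcases lt_trichotomy x j with h5 | h5 | h5
      · exact h3 (mem_filter.2 ⟨hxs, by omega, h5⟩)
      · exact h2 h5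
      · exact h4 (mem_filter.2 ⟨hxs, h5⟩)
    · exact (hf.2.1 x hxs).symm
  · rintro ⟨⟨g, hg⟩, ⟨h, hh⟩⟩
    have haj : a < j := lt_of_le_of_ne (s.min'_le _ hj) (Ne.symm hja)
    refine Prod.ext (Subtype.ext ?_) (Subtype.ext ?_)
    · funext x
      show (if x ∈ inn then (if x = a then j else if x = j then a
        else if x ∈ inn then g x else if x ∈ out then h x else x) else x) = g x
      by_cases h3 : x ∈ inn
      · obtain ⟨hxs, hax, hxj⟩ := mem_filter.1 h3
        rw [if_pos h3, if_neg (by omega), if_neg (by omega), if_pos h3]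
      · rw [if_neg h3]; exact (hg.2.1 x h3).symm
    · funext x
      show (if x ∈ out then (if x = a then j else if x = j then a
        else if x ∈ inn then g x else if x ∈ out then h x else x) else x) = h x
      by_cases h4 : x ∈ out
      · obtain ⟨hxs, hjx⟩ := mem_filter.1 h4
        rw [if_pos h4, if_neg (by omega), if_neg (by omega),
          if_neg (by simp only [hinn, mem_filter]; rintro ⟨-, -, hc⟩; omega), if_pos h4]
      · rw [if_neg h4]; exact (hh.2.1 x h4).symm

lemma sum_even_reindex (F : ℕ → ℕ) (q : ℕ) :
    ∑ m ∈ range (2*q + 1), (if 2 ∣ m then F m else 0) = ∑ i ∈ range (q + 1), F (2*i) := by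
  have himg : (range (2*q+1)).filter (fun m => 2 ∣ m) = (range (q+1)).image (fun i => 2*i) := by
    ext m
    simp only [mem_filter, mem_range, mem_image]
    constructor
    · rintro ⟨hm, k, rfl⟩
      exact ⟨k, by omega, rfl⟩
    · rintro ⟨i, hi, rfl⟩
      exact ⟨by omega, ⟨i, rfl⟩⟩
  rw [← Finset.sum_filter, himg, Finset.sum_image (fun a _ b _ h => by omega)]

lemma sum_ifcat_mul_even (G : ℕ → ℕ) (k : ℕ) :
    ∑ m ∈ range (2*k + 1), G m * (ifcat m * ifcat (2*k - m)) =
      ∑ i ∈ range (k + 1), G (2*i) * (catalan i * catalan (k - i)) := by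
  have h1 : ∀ m ∈ range (2*k+1), G m * (ifcat m * ifcat (2*k - m)) =
      if 2 ∣ m then G m * (ifcat m * ifcat (2*k-m)) else 0 := by
    intro m _
    by_cases h : 2 ∣ m
    · rw [if_pos h]
    · rw [if_neg h]; simp [ifcat, h]
  rw [Finset.sum_congr rfl h1, sum_even_reindex (fun m => G m * (ifcat m * ifcat (2*k-m))) k]
  refine Finset.sum_congr rfl fun i hi => ?_
  have hik : i ≤ k := by have := mem_range.mp hi; omega
  have e1 : ifcat (2*i) = catalan i := by
    simp only [ifcat]; rw [if_pos ⟨i, rfl⟩]; congr 1; omega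
  have e2 : ifcat (2*k - 2*i) = catalan (k - i) := by
    have h3 : 2*k - 2*i = 2*(k-i) := by omega
    simp only [ifcat, h3]; rw [if_pos ⟨k-i, rfl⟩]; congr 1; omega
  rw [e1, e2]

lemma sum_ifcat_mul_odd (G : ℕ → ℕ) (L : ℕ) (hL : ¬ 2 ∣ L) :
    ∑ m ∈ range (L + 1), G m * (ifcat m * ifcat (L - m)) = 0 := by
  refine Finset.sum_eq_zero fun m hm => ?_
  have hm' : m ≤ L := by have := mem_range.mp hm; omega
  by_cases h : 2 ∣ m
  · have h2 : ¬ 2 ∣ (L - m) := fun h2 => hL (by omega)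
    simp [ifcat, h2]
  · simp [ifcat, h]


lemma sum_ifcat_conv (L : ℕ) :
    ∑ m ∈ range (L+1), ifcat m * ifcat (L-m) = if 2 ∣ L then catalan (L/2 + 1) else 0 := by
  have hone : ∀ m ∈ range (L+1), ifcat m * ifcat (L-m) = (fun m => 1) m * (ifcat m * ifcat (L-m)) :=
    fun m _ => (one_mul _).symm
  rw [Finset.sum_congr rfl hone]
  by_cases hL : 2 ∣ L
  · obtain ⟨k, rfl⟩ := hL
    rw [if_pos ⟨k, rfl⟩, sum_ifcat_mul_even (fun _ => 1) k]
    simp only [one_mul]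
    have : 2 * k / 2 + 1 = k + 1 := by omega
    rw [this, catalan_succ' k, Finset.Nat.sum_antidiagonal_eq_sum_range_succ_mk]
  · rw [if_neg hL, sum_ifcat_mul_odd (fun _ => 1) L hL]

lemma card_NC (s : Finset ℕ) : Nat.card (NC s) = ifcat s.card := by
  induction s using Finset.strongInduction with
  | _ s IH => ?_
  rcases s.eq_empty_or_nonempty with rfl | hs
  · rw [NC_empty]; simp [ifcat]
  classical
  obtain ⟨r, hr⟩ : ∃ r, s.card = r := ⟨s.card, rfl⟩
  have hr0 : 0 < r := hr ▸ card_pos.mpr hs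
  set e := s.orderEmbOfFin hr with he
  have ham : s.min' hs ∈ s := s.min'_mem hs
  have he0 : e ⟨0, hr0⟩ = s.min' hs := Finset.orderEmbOfFin_zero hr hr0
  set φφ : NC s → Fin r := fun f =>
    (s.orderIsoOfFin hr).symm ⟨f.1 (s.min' hs), f.2.1 _ ham⟩ with hφφ
  have hcond : ∀ (f : NC s) (t : Fin r), φφ f = t ↔ f.1 (s.min' hs) = e t := by
    intro f t
    constructor
    · intro h
      have h2 := congrArg (s.orderIsoOfFin hr) h
      rw [OrderIso.apply_symm_apply] at h2
      have h3 := congrArg Subtype.val h2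
      rwa [Finset.coe_orderIsoOfFin_apply] at h3
    · intro h
      have h2 : (⟨f.1 (s.min' hs), f.2.1 _ ham⟩ : {x // x ∈ s}) = (s.orderIsoOfFin hr) t :=
        Subtype.ext (by rwa [Finset.coe_orderIsoOfFin_apply])
      rw [hφφ]
      simp only
      rw [h2, OrderIso.symm_apply_apply]
  set G : ℕ → ℕ := fun m => if m = 0 then 0 else ifcat (m-1) * ifcat (r-1-m) with hG
  have hper : ∀ t : Fin r, Nat.card {f : NC s // φφ f = t} = G (t : ℕ) := by
    intro t
    by_cases ht0 : (t : ℕ) = 0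
    · have ht : t = ⟨0, hr0⟩ := Fin.ext ht0
      subst ht
      have : IsEmpty {f : NC s // φφ f = ⟨0, hr0⟩} := by
        refine ⟨fun ⟨f, hf⟩ => ?_⟩
        rw [hcond, he0] at hf
        exact f.2.2.2.2.1 _ ham hf
      rw [Nat.card_of_isEmpty, hG]
      simp
    · have hj : e t ∈ s := Finset.orderEmbOfFin_mem s hr t
      have hja : e t ≠ s.min' hs := by
        rw [← he0]
        intro hc
        exact ht0 (by simpa using congrArg Fin.val (e.injective hc))
      have haj : s.min' hs < e t := lt_of_le_of_ne (s.min'_le _ hj) (Ne.symm hja)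
      have hequiv := (Equiv.subtypeEquivRight (fun f => hcond f t)).trans
        (fiber_equiv s hs (e t) hj hja)
      rw [Nat.card_congr hequiv, Nat.card_prod]
      have hsmap : s = Finset.univ.map e.toEmbedding := by
        refine (Finset.eq_of_subset_of_card_le ?_ ?_).symm
        · intro x hx
          obtain ⟨u, -, rfl⟩ := mem_map.1 hx
          exact Finset.orderEmbOfFin_mem s hr u
        · rw [card_map, Finset.card_univ, Fintype.card_fin, hr]
      have hinncard : (s.filter fun x => s.min' hs < x ∧ x < e t).card = (t : ℕ) - 1 := by
        rw [← he0, hsmap, filter_map, card_map]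
        have h1 : Finset.univ.filter ((fun x => e ⟨0, hr0⟩ < x ∧ x < e t) ∘ e.toEmbedding)
            = Finset.Ioo ⟨0, hr0⟩ t := by
          ext u
          simp only [mem_filter, mem_univ, true_and, mem_Ioo, Function.comp_apply,
            RelEmbedding.coe_toEmbedding]
          rw [e.lt_iff_lt, e.lt_iff_lt]
        rw [h1, Fin.card_Ioo]
        rfl
      have houtcard : (s.filter fun x => e t < x).card = r - 1 - (t : ℕ) := by
        rw [hsmap, filter_map, card_map]
        have h1 : Finset.univ.filter ((fun x => e t < x) ∘ e.toEmbedding)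
            = Finset.Ioi t := by
          ext u
          simp only [mem_filter, mem_univ, true_and, mem_Ioi, Function.comp_apply,
            RelEmbedding.coe_toEmbedding]
          rw [e.lt_iff_lt]
        rw [h1, Fin.card_Ioi]
      have hssub1 : (s.filter fun x => s.min' hs < x ∧ x < e t) ⊂ s :=
        filter_ssubset.2 ⟨_, ham, fun hc => lt_irrefl _ hc.1⟩
      have hssub2 : (s.filter fun x => e t < x) ⊂ s :=
        filter_ssubset.2 ⟨_, ham, fun hc => absurd hc (by omega)⟩
      rw [IH _ hssub1, IH _ hssub2, hinncard, houtcard, hG]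
      simp only [if_neg ht0]
  rw [card_fiber_sum φφ, Finset.sum_congr rfl (fun t _ => hper t),
    Fin.sum_univ_eq_sum_range G r, hr]
  obtain ⟨q, rfl⟩ : ∃ q, r = q + 1 := ⟨r - 1, by omega⟩
  rw [Finset.sum_range_succ']
  have hG0 : G 0 = 0 := by rw [hG]; simp
  have hGsucc : ∀ i ∈ range q, G (i + 1) = ifcat i * ifcat (q - 1 - i) := by
    intro i _
    rw [hG]
    simp only [Nat.add_sub_cancel, if_neg (Nat.succ_ne_zero i)]
    congr 2
    omega
  rw [hG0, add_zero, Finset.sum_congr rfl hGsucc]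
  rcases Nat.eq_zero_or_pos q with rfl | hq
  · simp [ifcat]
  obtain ⟨L, rfl⟩ : ∃ L, q = L + 1 := ⟨q - 1, by omega⟩
  have hL : ∀ i ∈ range (L+1), ifcat i * ifcat (L + 1 - 1 - i) = ifcat i * ifcat (L - i) := by
    intro i _
    congr 2
  rw [Finset.sum_congr rfl hL, sum_ifcat_conv L]
  unfold ifcat
  by_cases h2 : 2 ∣ L
  · rw [if_pos h2, if_pos (by omega)]
    congr 1
    omega
  · rw [if_neg h2, if_neg (by omega)]

lemma cast_catalan (k : ℕ) : (catalan k : ℚ) = (2*k)! / (k ! * (k+1)!) := by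
  have h1 : (k+1) * catalan k = (2*k).choose k := by
    rw [succ_mul_catalan_eq_centralBinom, Nat.centralBinom_eq_two_mul_choose]
  have h2 : ((k+1) * catalan k : ℚ) = ((2*k).choose k : ℚ) := by exact_mod_cast h1
  rw [Nat.cast_choose ℚ (by omega : k ≤ 2*k)] at h2
  have h3 : 2*k - k = k := by omega
  rw [h3] at h2
  have hk : (k ! : ℚ) ≠ 0 := by exact_mod_cast (Nat.factorial_pos k).ne'
  have hk1 : (((k+1))! : ℚ) ≠ 0 := by exact_mod_cast (Nat.factorial_pos (k+1)).ne'
  have hkk : ((k:ℚ)+1) ≠ 0 := by positivity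
  rw [Nat.factorial_succ]
  push_cast at h2 ⊢
  field_simp at h2 ⊢
  linear_combination h2

lemma key_id (n : ℕ) :
    ∑ i ∈ range (n+1), (2*n).choose (2*i) * (catalan i * catalan (n-i)) =
      catalan n * catalan (n + 1) := by
  have hfac : ∀ m : ℕ, ((m)! : ℚ) ≠ 0 := fun m => by exact_mod_cast (Nat.factorial_pos m).ne'
  have hcast : ∀ i ∈ range (n+1),
      (((2*n).choose (2*i) * (catalan i * catalan (n-i)) : ℕ) : ℚ) =
        ((2*n)! / ((n+1)! * (n+1)!)) * (((n+1).choose i * (n+1).choose (i+1) : ℕ) : ℚ) := by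
    intro i hi
    have hin : i ≤ n := by have := mem_range.mp hi; omega
    push_cast
    rw [cast_catalan, cast_catalan,
      Nat.cast_choose ℚ (by omega : 2*i ≤ 2*n),
      Nat.cast_choose ℚ (by omega : i ≤ n+1),
      Nat.cast_choose ℚ (by omega : i+1 ≤ n+1)]
    have e1 : 2*n - 2*i = 2*(n-i) := by omega
    have e2 : n+1-i = (n-i)+1 := by omega
    have e3 : n+1-(i+1) = n-i := by omega
    rw [e1, e2, e3]
    field_simp
  have hsum : ∑ i ∈ range (n+1), (n+1).choose i * (n+1).choose (i+1) = (2*n+2).choose n := by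
    have h := Nat.add_choose_eq (n+1) (n+1) n
    rw [Finset.Nat.sum_antidiagonal_eq_sum_range_succ_mk] at h
    have hc : ∀ i ∈ range (n+1),
        (n+1).choose (i, n-i).1 * (n+1).choose (i, n-i).2 =
          (n+1).choose i * (n+1).choose (i+1) := by
      intro i hi
      have hin : i ≤ n := by have := mem_range.mp hi; omega
      have : (n+1).choose (n-i) = (n+1).choose (i+1) := by
        rw [← Nat.choose_symm (by omega : i+1 ≤ n+1)]
        congr 1; omega
      simp [this]
    rw [Finset.sum_congr rfl hc] at h
    rw [← h]; congr 1; omega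
  have main : ((∑ i ∈ range (n+1), (2*n).choose (2*i) * (catalan i * catalan (n-i)) : ℕ) : ℚ) =
      ((catalan n * catalan (n+1) : ℕ) : ℚ) := by
    rw [Nat.cast_sum, Finset.sum_congr rfl hcast, ← Finset.mul_sum, ← Nat.cast_sum, hsum]
    rw [Nat.cast_choose ℚ (by omega : n ≤ 2*n+2)]
    push_cast
    rw [cast_catalan, cast_catalan]
    have e1 : 2*n+2-n = n+2 := by omega
    have e2 : 2*(n+1) = 2*n+2 := by omega
    rw [e1, e2]
    field_simp
  exact_mod_cast main


lemma mv_lt {N : ℕ} {A : Finset (Fin N)} {x : ℕ} (hx : x ∈ A.map Fin.valEmbedding) : x < N := by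
  obtain ⟨i, -, rfl⟩ := mem_map.1 hx; exact i.isLt

lemma mem_mv {N : ℕ} {A : Finset (Fin N)} {i : Fin N} :
    (i : ℕ) ∈ A.map Fin.valEmbedding ↔ i ∈ A := by
  simp only [mem_map, Fin.valEmbedding_apply]
  constructor
  · rintro ⟨a, ha, h⟩
    rwa [Fin.val_injective h] at ha
  · intro h; exact ⟨i, h, rfl⟩

lemma fin2_eq_one {z : Fin 2} (hz : z ≠ 0) : z = 1 := by omega

lemma NCfun_of_matching {n : ℕ} {f : Fin (2*n) → Fin (2*n)} {c : Fin (2*n) → Fin 2}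
    (hm : IsColoredMatching n 2 f c) (hnc : IsNoncrossing n 2 f c) (B : Finset (Fin (2*n)))
    (hB : ∀ i, f i ∈ B ↔ i ∈ B) (hcB : ∀ i j, i ∈ B → j ∈ B → c i = c j) :
    NCfun (B.map Fin.valEmbedding)
      (fun x => if hx : x < 2*n then
        (if (⟨x, hx⟩ : Fin (2*n)) ∈ B then (f ⟨x, hx⟩ : ℕ) else x) else x) := by
  set g : ℕ → ℕ := fun x => if hx : x < 2*n then
      (if (⟨x, hx⟩ : Fin (2*n)) ∈ B then (f ⟨x, hx⟩ : ℕ) else x) else x with hg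
  have hgv : ∀ i : Fin (2*n), i ∈ B → g (i : ℕ) = ↑(f i) := by
    intro i hi
    rw [hg]
    simp only [i.isLt, dite_true, reduceDIte, Fin.eta]
    rw [if_pos hi]
  have hgnv : ∀ i : Fin (2*n), i ∉ B → g (i : ℕ) = i := by
    intro i hi
    rw [hg]
    simp only [i.isLt, dite_true, reduceDIte, Fin.eta]
    rw [if_neg hi]
  have hgid : ∀ x, x ∉ B.map Fin.valEmbedding → g x = x := by
    intro x hx
    by_cases hlt : x < 2*n
    · have : (⟨x, hlt⟩ : Fin (2*n)) ∉ B := fun hc => hx (mem_map.2 ⟨⟨x, hlt⟩, hc, rfl⟩)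
      have := hgnv ⟨x, hlt⟩ this
      simpa using this
    · rw [hg]; simp only [dif_neg hlt]
  refine ⟨?_, hgid, ?_, ?_, ?_⟩
  · intro x hx
    obtain ⟨i, hi, rfl⟩ := mem_map.1 hx
    simp only [Fin.valEmbedding_apply]
    rw [hgv i hi]
    exact mem_mv.2 ((hB i).2 hi)
  · intro x hx
    obtain ⟨i, hi, rfl⟩ := mem_map.1 hx
    simp only [Fin.valEmbedding_apply]
    rw [hgv i hi, hgv (f i) ((hB i).2 hi), hm.1 i]
  · intro x hx
    obtain ⟨i, hi, rfl⟩ := mem_map.1 hx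
    simp only [Fin.valEmbedding_apply]
    rw [hgv i hi]
    intro hc
    exact hm.2.1 i (Fin.ext hc)
  · intro x hx y hy hxy hyfx hlt
    obtain ⟨i, hi, rfl⟩ := mem_map.1 hx
    obtain ⟨i', hi', rfl⟩ := mem_map.1 hy
    simp only [Fin.valEmbedding_apply] at hxy hyfx hlt
    rw [hgv i hi] at hyfx hlt
    rw [hgv i' hi'] at hlt
    exact hnc ⟨i, i', hcB i i' hi hi', by omega, by omega, by omega⟩

noncomputable def color_equiv (n : ℕ) (A : Finset (Fin (2*n))) :
    {p : {q : (Fin (2*n) → Fin (2*n)) × (Fin (2*n) → Fin 2) //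
        IsColoredMatching n 2 q.1 q.2 ∧ IsNoncrossing n 2 q.1 q.2} //
      Finset.univ.filter (fun i => p.1.2 i = 0) = A} ≃
    NC (A.map Fin.valEmbedding) × NC (Aᶜ.map Fin.valEmbedding) := by
  classical
  have memA : ∀ (c : Fin (2*n) → Fin 2), Finset.univ.filter (fun i => c i = 0) = A →
      ∀ i, (i ∈ A ↔ c i = 0) := by
    intro c hA i
    rw [← hA, mem_filter]
    simp
  refine
  { toFun := fun p =>
      (⟨_, NCfun_of_matching p.1.2.1 p.1.2.2 A
          (fun i => by
            rw [memA p.1.1.2 p.2, memA p.1.1.2 p.2, p.1.2.1.2.2 i])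
          (fun i j hi hj => by
            rw [(memA p.1.1.2 p.2 i).1 hi, (memA p.1.1.2 p.2 j).1 hj])⟩,
       ⟨_, NCfun_of_matching p.1.2.1 p.1.2.2 Aᶜ
          (fun i => by
            simp only [Finset.mem_compl]
            rw [not_iff_not, memA p.1.1.2 p.2, memA p.1.1.2 p.2, p.1.2.1.2.2 i])
          (fun i j hi hj => by
            rw [Finset.mem_compl] at hi hj
            rw [fin2_eq_one (fun hc => hi ((memA p.1.1.2 p.2 i).2 hc)),
              fin2_eq_one (fun hc => hj ((memA p.1.1.2 p.2 j).2 hc))])⟩),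
    invFun := fun gh => by
      refine ⟨⟨(fun i => if hi : i ∈ A then
          ⟨gh.1.1 i, mv_lt (gh.1.2.1 i (mem_mv.2 hi))⟩ else
          ⟨gh.2.1 i, mv_lt (gh.2.2.1 i (mem_mv.2 (Finset.mem_compl.2 hi)))⟩,
        fun i => if i ∈ A then 0 else 1), ⟨⟨?_, ?_, ?_⟩, ?_⟩⟩, ?_⟩
      · -- involution
        intro i
        by_cases hi : i ∈ A
        · simp only [dif_pos hi]
          have h1 : gh.1.1 (i : ℕ) ∈ A.map Fin.valEmbedding := gh.1.2.1 _ (mem_mv.2 hi)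
          have h2 : (⟨gh.1.1 (i : ℕ), mv_lt h1⟩ : Fin (2*n)) ∈ A := mem_mv.1 h1
          simp only [dif_pos h2]
          exact Fin.ext (gh.1.2.2.2.1 _ (mem_mv.2 hi))
        · simp only [dif_neg hi]
          have hic : i ∈ Aᶜ := Finset.mem_compl.2 hi
          have h1 : gh.2.1 (i : ℕ) ∈ Aᶜ.map Fin.valEmbedding := gh.2.2.1 _ (mem_mv.2 hic)
          have h2 : (⟨gh.2.1 (i : ℕ), mv_lt h1⟩ : Fin (2*n)) ∉ A :=
            Finset.mem_compl.1 (mem_mv.1 h1)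
          simp only [dif_neg h2]
          exact Fin.ext (gh.2.2.2.2.1 _ (mem_mv.2 hic))
      · -- no fixed points
        intro i
        by_cases hi : i ∈ A
        · simp only [dif_pos hi]
          intro hc
          exact gh.1.2.2.2.2.1 _ (mem_mv.2 hi) (congrArg Fin.val hc)
        · simp only [dif_neg hi]
          intro hc
          exact gh.2.2.2.2.2.1 _ (mem_mv.2 (Finset.mem_compl.2 hi)) (congrArg Fin.val hc)
      · -- colors constant on arcs
        intro i
        by_cases hi : i ∈ A
        · simp only [dif_pos hi]
          have h1 : gh.1.1 (i : ℕ) ∈ A.map Fin.valEmbedding := gh.1.2.1 _ (mem_mv.2 hi)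
          have h2 : (⟨gh.1.1 (i : ℕ), mv_lt h1⟩ : Fin (2*n)) ∈ A := mem_mv.1 h1
          rw [if_pos h2, if_pos hi]
        · simp only [dif_neg hi]
          have hic : i ∈ Aᶜ := Finset.mem_compl.2 hi
          have h1 : gh.2.1 (i : ℕ) ∈ Aᶜ.map Fin.valEmbedding := gh.2.2.1 _ (mem_mv.2 hic)
          have h2 : (⟨gh.2.1 (i : ℕ), mv_lt h1⟩ : Fin (2*n)) ∉ A :=
            Finset.mem_compl.1 (mem_mv.1 h1)
          rw [if_neg h2, if_neg hi]
      · -- noncrossing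
        rintro ⟨i, i', hc, h1, h2, h3⟩
        simp only at hc h2 h3
        rw [Fin.lt_def] at h1 h2 h3
        by_cases hi : i ∈ A
        · have hi' : i' ∈ A := by
            by_contra hi'
            rw [if_pos hi, if_neg hi'] at hc
            exact absurd hc (by decide)
          simp only [dif_pos hi, dif_pos hi'] at h2 h3
          exact gh.1.2.2.2.2.2 _ (mem_mv.2 hi) _ (mem_mv.2 hi') h1 h2 h3
        · have hi' : i' ∉ A := by
            by_contra hi'
            rw [if_neg hi, if_pos hi'] at hc
            exact absurd hc (by decide)
          simp only [dif_neg hi, dif_neg hi'] at h2 h3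
          exact gh.2.2.2.2.2.2 _ (mem_mv.2 (Finset.mem_compl.2 hi)) _
            (mem_mv.2 (Finset.mem_compl.2 hi')) h1 h2 h3
      · -- the color-0 set is A
        ext i
        simp only [mem_filter, mem_univ, true_and]
        by_cases hi : i ∈ A
        · simp [hi]
        · simp only [if_neg hi, hi, iff_false]
          decide
    left_inv := by
      rintro ⟨⟨⟨f, c⟩, hm, hnc⟩, hA⟩
      have hmem : ∀ i, (i ∈ A ↔ c i = 0) := memA c hA
      apply Subtype.ext
      apply Subtype.ext
      refine Prod.ext ?_ ?_
      · funext i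
        show (if hi : i ∈ A then _ else _) = f i
        by_cases hi : i ∈ A
        · rw [dif_pos hi]
          apply Fin.ext
          show (fun x => if hx : x < 2*n then
            (if (⟨x, hx⟩ : Fin (2*n)) ∈ A then ((f ⟨x, hx⟩ : Fin (2*n)) : ℕ) else x) else x)
              (i : ℕ) = ↑(f i)
          simp only [i.isLt, dif_pos, Fin.eta]
          rw [if_pos hi]
        · rw [dif_neg hi]
          apply Fin.ext
          show (fun x => if hx : x < 2*n then
            (if (⟨x, hx⟩ : Fin (2*n)) ∈ Aᶜ then ((f ⟨x, hx⟩ : Fin (2*n)) : ℕ) else x) else x)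
              (i : ℕ) = ↑(f i)
          simp only [i.isLt, dif_pos, Fin.eta]
          rw [if_pos (Finset.mem_compl.2 hi)]
      · funext i
        show (if i ∈ A then (0 : Fin 2) else 1) = c i
        by_cases hi : i ∈ A
        · rw [if_pos hi, (hmem i).1 hi]
        · rw [if_neg hi, fin2_eq_one (fun hc => hi ((hmem i).2 hc))]
    right_inv := by
      rintro ⟨⟨g, hg⟩, ⟨h, hh⟩⟩
      refine Prod.ext (Subtype.ext ?_) (Subtype.ext ?_)
      · funext x
        show (if hx : x < 2*n then
            (if (⟨x, hx⟩ : Fin (2*n)) ∈ A then ((if hi : (⟨x, hx⟩ : Fin (2*n)) ∈ A then _ else _ : Fin (2*n)) : ℕ) else x) else x) = g x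
        by_cases hx : x < 2*n
        · rw [dif_pos hx]
          by_cases hi : (⟨x, hx⟩ : Fin (2*n)) ∈ A
          · rw [if_pos hi, dif_pos hi]
          · rw [if_neg hi]
            have : x ∉ A.map Fin.valEmbedding := fun hc => hi (mem_mv.1 hc)
            exact (hg.2.1 x this).symm
        · rw [dif_neg hx]
          have : x ∉ A.map Fin.valEmbedding := fun hc => hx (mv_lt hc)
          exact (hg.2.1 x this).symm
      · funext x
        show (if hx : x < 2*n then
            (if (⟨x, hx⟩ : Fin (2*n)) ∈ Aᶜ then ((if hi : (⟨x, hx⟩ : Fin (2*n)) ∈ A then _ else _ : Fin (2*n)) : ℕ) else x) else x) = h x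
        by_cases hx : x < 2*n
        · rw [dif_pos hx]
          by_cases hi : (⟨x, hx⟩ : Fin (2*n)) ∈ A
          · rw [if_neg (by simpa using hi)]
            have : x ∉ Aᶜ.map Fin.valEmbedding := fun hc => (Finset.mem_compl.1 (mem_mv.1 hc)) hi
            exact (hh.2.1 x this).symm
          · rw [if_pos (Finset.mem_compl.2 hi), dif_neg hi]
        · rw [dif_neg hx]
          have : x ∉ Aᶜ.map Fin.valEmbedding := fun hc => hx (mv_lt hc)
          exact (hh.2.1 x this).symm }

theorem stmt1 (n : ℕ) :
    Nat.card {p : (Fin (2*n) → Fin (2*n)) × (Fin (2*n) → Fin 2) //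
        IsColoredMatching n 2 p.1 p.2 ∧ IsNoncrossing n 2 p.1 p.2} =
      catalan n * catalan (n + 1) := by
  classical
  rw [card_fiber_sum (fun p : {p : (Fin (2*n) → Fin (2*n)) × (Fin (2*n) → Fin 2) //
        IsColoredMatching n 2 p.1 p.2 ∧ IsNoncrossing n 2 p.1 p.2} =>
      Finset.univ.filter (fun i => p.1.2 i = 0))]
  have hper : ∀ A : Finset (Fin (2*n)),
      Nat.card {p : {p : (Fin (2*n) → Fin (2*n)) × (Fin (2*n) → Fin 2) //
          IsColoredMatching n 2 p.1 p.2 ∧ IsNoncrossing n 2 p.1 p.2} //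
        (fun p => Finset.univ.filter (fun i => p.1.2 i = 0)) p = A} =
      ifcat A.card * ifcat (2*n - A.card) := by
    intro A
    rw [Nat.card_congr ((Equiv.subtypeEquivRight (fun p => Iff.rfl)).trans (color_equiv n A)),
      Nat.card_prod, card_NC, card_NC, card_map, card_map, Finset.card_compl, Fintype.card_fin]
  rw [Finset.sum_congr rfl (fun A _ => hper A), ← Finset.powerset_univ,
    Finset.powerset_card_disjiUnion]
  refine (Finset.sum_disjiUnion _ _ _).trans ?_
  have hconst : ∀ m ∈ range ((Finset.univ : Finset (Fin (2*n))).card + 1),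
      ∑ A ∈ Finset.powersetCard m (Finset.univ : Finset (Fin (2*n))),
        (ifcat A.card * ifcat (2*n - A.card)) = (2*n).choose m * (ifcat m * ifcat (2*n - m)) := by
    intro m hm
    have hc : ∀ A ∈ Finset.powersetCard m (Finset.univ : Finset (Fin (2*n))),
        ifcat A.card * ifcat (2*n - A.card) = ifcat m * ifcat (2*n - m) := fun A hA => by
      rw [(Finset.mem_powersetCard.1 hA).2]
    rw [Finset.sum_congr rfl hc, Finset.sum_const, Finset.card_powersetCard,
      Finset.card_univ, Fintype.card_fin, smul_eq_mul]
  rw [Finset.sum_congr rfl hconst, Finset.card_univ, Fintype.card_fin,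
    sum_ifcat_mul_even ((2*n).choose) n]
  exact key_id n
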